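/- Let Y_1 ⊋ Y_2 ⊋ ⋯ ⊋ Y_t (t ≥ 2) be a strictly descending chain of finite sets of distinct points in P^n over a field of characteristic zero, and let ν_1,…,ν_t ≥ 1. Then for all sufficiently large i, (I_{Y_1}^{ν_1} I_{Y_2}^{ν_2} ⋯ I_{Y_t}^{ν_t})_i ⊆ (∂(I_{Y_1}^{ν_1+1} I_{Y_2}^{ν_2} ⋯ I_{Y_t}^{ν_t}))_i. -/

import Mathlib

open MvPolynomial Finset
open scoped Pointwise

/-- The homogeneous vanishing ideal of the `K`-rational point of `ℙ^n` with homogeneous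
coordinates `v`. -/
noncomputable def pointIdeal {K : Type*} [Field K] {n : ℕ} (v : Fin (n + 1) → K) :
    Ideal (MvPolynomial (Fin (n + 1)) K) :=
  Ideal.span {F | (∃ d, F.IsHomogeneous d) ∧ MvPolynomial.eval v F = 0}

/-- The ideal `∂I` generated by all partial derivatives of elements of `I`. -/
noncomputable def partialsIdeal {K : Type*} [Field K] {n : ℕ}
    (I : Ideal (MvPolynomial (Fin (n + 1)) K)) : Ideal (MvPolynomial (Fin (n + 1)) K) :=
  Ideal.span {g | ∃ F ∈ I, ∃ j : Fin (n + 1), g = pderiv j F}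

section Aux


theorem neg_one_powerset_sum {R : Type*} [CommRing R] {α : Type*} [DecidableEq α] (E : Finset α) :
    (∑ u ∈ E.powerset, (-1 : R) ^ u.card) = if E = ∅ then 1 else 0 := by
  have := @Finset.sum_powerset_neg_one_pow_card α _ E
  calc (∑ u ∈ E.powerset, (-1 : R) ^ u.card)
      = ((∑ u ∈ E.powerset, (-1 : ℤ) ^ u.card : ℤ) : R) := by push_cast; rfl
    _ = ((if E = ∅ then 1 else 0 : ℤ) : R) := by rw [this]
    _ = if E = ∅ then 1 else 0 := by split <;> simp

theorem polar_identity {R : Type*} [CommRing R] (m : ℕ) (y : Fin m → R) :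
    (m.factorial : R) * ∏ c, y c =
      ∑ s ∈ (univ : Finset (Fin m)).powerset, (-1 : R) ^ (m - s.card) * (∑ c ∈ s, y c) ^ m := by
  classical
  have expand : ∀ s : Finset (Fin m), (∑ c ∈ s, y c) ^ m
      = ∑ p : Fin m → Fin m, if (∀ i, p i ∈ s) then ∏ i, y (p i) else 0 := by
    intro s
    rw [Finset.sum_pow']
    rw [← Fintype.sum_extend_by_zero (Fintype.piFinset fun _ => s)]
    refine Finset.sum_congr rfl fun p _ => ?_
    by_cases h : p ∈ Fintype.piFinset fun _ => s
    · rw [if_pos h, if_pos]; rwa [Fintype.mem_piFinset] at h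
    · rw [if_neg h, if_neg]; rwa [Fintype.mem_piFinset] at h
  rw [Finset.sum_congr rfl (fun s _ => by rw [expand s, Finset.mul_sum] :
    ∀ s ∈ (univ : Finset (Fin m)).powerset, (-1 : R) ^ (m - s.card) * (∑ c ∈ s, y c) ^ m
      = ∑ p : Fin m → Fin m, (-1 : R) ^ (m - s.card) * (if (∀ i, p i ∈ s) then ∏ i, y (p i) else 0))]
  rw [Finset.sum_comm]
  have inner : ∀ p : Fin m → Fin m,
      (∑ s ∈ (univ : Finset (Fin m)).powerset,
        (-1 : R) ^ (m - s.card) * (if (∀ i, p i ∈ s) then ∏ i, y (p i) else 0))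
      = if Finset.image p univ = univ then ∏ i, y (p i) else 0 := by
    intro p
    set R0 : Finset (Fin m) := Finset.image p univ with hR0
    have hcond : ∀ s : Finset (Fin m), (∀ i, p i ∈ s) ↔ R0 ⊆ s := by
      intro s
      constructor
      · intro h x hx; rcases Finset.mem_image.mp hx with ⟨i, _, rfl⟩; exact h i
      · intro h i; exact h (Finset.mem_image.mpr ⟨i, Finset.mem_univ i, rfl⟩)
    have step1 : (∑ s ∈ (univ : Finset (Fin m)).powerset,
        (-1 : R) ^ (m - s.card) * (if (∀ i, p i ∈ s) then ∏ i, y (p i) else 0))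
        = ∑ s ∈ (univ : Finset (Fin m)).powerset with R0 ⊆ s,
            (-1 : R) ^ (m - s.card) * ∏ i, y (p i) := by
      rw [Finset.sum_filter]
      refine Finset.sum_congr rfl fun s _ => ?_
      by_cases h : R0 ⊆ s
      · rw [if_pos ((hcond s).mpr h), if_pos h]
      · rw [if_neg (fun hh => h ((hcond s).mp hh)), if_neg h, mul_zero]
    rw [step1]
    have hdisj : ∀ u : Finset (Fin m), u ⊆ univ \ R0 → Disjoint R0 u := by
      intro u hu
      rw [Finset.disjoint_left]
      intro a ha hau
      exact (Finset.mem_sdiff.mp (hu hau)).2 ha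
    have step2 : (∑ s ∈ (univ : Finset (Fin m)).powerset with R0 ⊆ s,
            (-1 : R) ^ (m - s.card) * ∏ i, y (p i))
        = ∑ u ∈ (univ \ R0).powerset, (-1 : R) ^ (m - (R0 ∪ u).card) * ∏ i, y (p i) := by
      refine Finset.sum_nbij' (fun s => s \ R0) (fun u => R0 ∪ u) ?_ ?_ ?_ ?_ ?_
      · intro s hs
        simp only [Finset.mem_filter, Finset.mem_powerset] at hs
        exact Finset.mem_powerset.mpr (Finset.sdiff_subset_sdiff hs.1 (le_refl _))
      · intro u hu
        simp only [Finset.mem_filter, Finset.mem_powerset]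
        exact ⟨Finset.subset_univ _, Finset.subset_union_left⟩
      · intro s hs
        simp only [Finset.mem_filter, Finset.mem_powerset] at hs
        exact Finset.union_sdiff_of_subset hs.2
      · intro u hu
        rw [Finset.mem_powerset] at hu
        exact Finset.union_sdiff_cancel_left (hdisj u hu)
      · intro s hs
        simp only [Finset.mem_filter, Finset.mem_powerset] at hs
        rw [Finset.union_sdiff_of_subset hs.2]
    rw [step2]
    have hcard : ∀ u ∈ (univ \ R0).powerset, (R0 ∪ u).card = R0.card + u.card := by
      intro u hu
      rw [Finset.mem_powerset] at hu
      exact Finset.card_union_of_disjoint (hdisj u hu)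
    have hsign : ∀ u ∈ (univ \ R0).powerset,
        (-1 : R) ^ (m - (R0 ∪ u).card) = (-1 : R) ^ (m - R0.card) * (-1 : R) ^ u.card := by
      intro u hu
      have hle : (R0 ∪ u).card ≤ m := by
        calc (R0 ∪ u).card ≤ (univ : Finset (Fin m)).card := Finset.card_le_card (Finset.subset_univ _)
        _ = m := by simp
      rw [hcard u hu] at hle ⊢
      have h2 : (m - R0.card) = (m - (R0.card + u.card)) + u.card := by omega
      rw [h2, pow_add, mul_assoc, ← pow_add]
      have : (-1 : R) ^ (u.card + u.card) = 1 := Even.neg_one_pow ⟨u.card, rfl⟩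
      rw [this, mul_one]
    rw [Finset.sum_congr rfl (fun u hu => by rw [hsign u hu])]
    have : ∑ u ∈ (univ \ R0).powerset, (-1:R) ^ (m - R0.card) * (-1:R) ^ u.card * ∏ i, y (p i)
        = ((-1:R) ^ (m - R0.card) * ∏ i, y (p i)) * ∑ u ∈ (univ \ R0).powerset, (-1:R) ^ u.card := by
      rw [Finset.mul_sum]; exact Finset.sum_congr rfl fun u _ => by ring
    rw [this, neg_one_powerset_sum]
    by_cases hR : R0 = univ
    · rw [if_pos (by rw [hR, Finset.sdiff_self]), if_pos hR, hR]
      simp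
    · rw [if_neg, if_neg hR]
      · ring
      · intro h
        exact hR (Finset.eq_univ_of_forall fun x => by
          by_contra hx
          have : x ∈ (univ : Finset (Fin m)) \ R0 := Finset.mem_sdiff.mpr ⟨Finset.mem_univ x, hx⟩
          rw [h] at this
          exact absurd this (Finset.notMem_empty x))
  rw [Finset.sum_congr rfl (fun p _ => inner p)]
  rw [← Finset.sum_filter]
  have hperm : ∑ p ∈ Finset.univ.filter (fun p : Fin m → Fin m => Finset.image p univ = univ),
        ∏ i, y (p i)
      = ∑ e : Equiv.Perm (Fin m), ∏ i, y (e i) := by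
    refine (Finset.sum_nbij (fun e : Equiv.Perm (Fin m) => ⇑e) ?_ ?_ ?_ ?_).symm
    · intro e _
      simp only [Finset.mem_filter, Finset.mem_univ, true_and]
      exact Finset.image_univ_equiv e
    · intro e _ e' _ h
      exact Equiv.coe_fn_injective h
    · intro p hp
      simp only [Finset.coe_filter, Set.mem_setOf_eq, Finset.mem_univ, true_and] at hp
      have hsurj : Function.Surjective p := by
        intro x
        have : x ∈ Finset.image p univ := by rw [hp]; exact Finset.mem_univ x
        rcases Finset.mem_image.mp this with ⟨i, _, rfl⟩
        exact ⟨i, rfl⟩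
      have hbij : Function.Bijective p := Finite.surjective_iff_bijective.mp hsurj
      exact ⟨Equiv.ofBijective p hbij, Finset.mem_coe.mpr (Finset.mem_univ _), rfl⟩
    · intro e _
      rfl
  rw [hperm]
  rw [Finset.sum_congr rfl (fun e _ => Equiv.prod_comp e y :
    ∀ e ∈ (univ : Finset (Equiv.Perm (Fin m))), ∏ i, y (e i) = ∏ i, y i)]
  rw [Finset.sum_const, Finset.card_univ, Fintype.card_perm, Fintype.card_fin, nsmul_eq_mul]


theorem euler_identity {σ : Type*} [Fintype σ] [DecidableEq σ] {R : Type*} [CommSemiring R]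
    {F : MvPolynomial σ R} {d : ℕ} (hF : F.IsHomogeneous d) :
    ∑ j, (X j : MvPolynomial σ R) * pderiv j F = d • F := by
  have key : ∀ u ∈ F.support, ∑ j, (X j : MvPolynomial σ R) * pderiv j (monomial u (coeff u F))
      = d • monomial u (coeff u F) := by
    intro u hu
    have hdeg : ∑ j, u j = d := by
      have h1 : u.degree = d := by
        by_contra hne
        exact mem_support_iff.mp hu (hF.coeff_eq_zero hne)
      rw [← h1, Finsupp.degree]
      exact (Finset.sum_subset (Finset.subset_univ _)
        (fun x _ hx => Finsupp.notMem_support_iff.mp hx)).symm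
    have term : ∀ j, (X j : MvPolynomial σ R) * pderiv j (monomial u (coeff u F))
        = (u j) • monomial u (coeff u F) := by
      intro j
      rw [pderiv_monomial]
      by_cases hj : u j = 0
      · rw [hj]; simp
      · have hexp : Finsupp.single j 1 + (u - Finsupp.single j 1) = u := by
          ext a
          simp only [Finsupp.add_apply, Finsupp.tsub_apply, Finsupp.single_apply]
          by_cases ha : j = a
          · subst ha; simp; omega
          · simp [ha]
        rw [X, monomial_mul, one_mul, hexp, smul_monomial]
        congr 1
        rw [nsmul_eq_mul, mul_comm]
    rw [Finset.sum_congr rfl (fun j _ => term j), ← Finset.sum_smul, hdeg]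
  calc ∑ j, (X j : MvPolynomial σ R) * pderiv j F
      = ∑ j, ∑ u ∈ F.support, (X j : MvPolynomial σ R) * pderiv j (monomial u (coeff u F)) := by
        refine Finset.sum_congr rfl fun j _ => ?_
        conv_lhs => rw [F.as_sum]
        rw [map_sum, Finset.mul_sum]
    _ = ∑ u ∈ F.support, ∑ j, (X j : MvPolynomial σ R) * pderiv j (monomial u (coeff u F)) :=
        Finset.sum_comm
    _ = ∑ u ∈ F.support, d • monomial u (coeff u F) := Finset.sum_congr rfl key
    _ = d • F := by rw [← Finset.smul_sum, ← F.as_sum]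

variable {σ : Type*} {R : Type*} [CommSemiring R]

theorem homogComponent_homog_mul {P A : MvPolynomial σ R} {d : ℕ} (hP : P.IsHomogeneous d)
    (i : ℕ) :
    homogeneousComponent i (P * A) = if d ≤ i then P * homogeneousComponent (i - d) A else 0 := by
  conv_lhs => rw [← sum_homogeneousComponent A, Finset.mul_sum, map_sum]
  have key : ∀ e ∈ Finset.range (A.totalDegree + 1),
      homogeneousComponent i (P * homogeneousComponent e A)
        = if i = d + e then P * homogeneousComponent e A else 0 := by
    intro e _
    exact homogeneousComponent_of_mem (hP.mul (homogeneousComponent_isHomogeneous e A))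
  rw [Finset.sum_congr rfl key]
  by_cases hdi : d ≤ i
  · rw [if_pos hdi]
    have hsum : ∀ e ∈ Finset.range (A.totalDegree + 1),
        (if i = d + e then P * homogeneousComponent e A else 0)
          = (if e = i - d then P * homogeneousComponent e A else 0) := by
      intro e _
      by_cases h : i = d + e
      · rw [if_pos h, if_pos (by omega)]
      · rw [if_neg h, if_neg (by omega)]
    rw [Finset.sum_congr rfl hsum]
    rw [Finset.sum_ite_eq' (Finset.range (A.totalDegree + 1)) (i - d)
      (fun e => P * homogeneousComponent e A)]
    split_ifs with hmem
    · rfl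
    · rw [Finset.mem_range, not_lt] at hmem
      rw [homogeneousComponent_eq_zero _ A (by omega), mul_zero]
  · rw [if_neg hdi]
    rw [Finset.sum_eq_zero]
    intro e _
    rw [if_neg (by omega)]

/-- An ideal is component-closed if it contains all homogeneous components of its members. -/
def CompClosed (I : Ideal (MvPolynomial σ R)) : Prop :=
  ∀ x ∈ I, ∀ i, homogeneousComponent i x ∈ I

theorem compClosed_span {H : Set (MvPolynomial σ R)}
    (hH : ∀ f ∈ H, ∃ d, f.IsHomogeneous d) : CompClosed (Ideal.span H) := by
  intro x hx
  refine Submodule.span_induction ?_ ?_ ?_ ?_ hx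
  · intro f hf i
    obtain ⟨d, hd⟩ := hH f hf
    rw [homogeneousComponent_of_mem hd]
    split_ifs
    · exact Ideal.subset_span hf
    · exact Ideal.zero_mem _
  · intro i; rw [map_zero]; exact Ideal.zero_mem _
  · intro a b _ _ ha hb i
    rw [map_add]; exact Ideal.add_mem _ (ha i) (hb i)
  · intro a x _ hx i
    have hx' : homogeneousComponent i (a • x)
        = ∑ e ∈ Finset.range (a.totalDegree + 1),
            homogeneousComponent i (homogeneousComponent e a * x) := by
      rw [smul_eq_mul]
      conv_lhs => rw [← sum_homogeneousComponent a]
      rw [Finset.sum_mul, map_sum]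
    rw [hx']
    refine Ideal.sum_mem _ fun e _ => ?_
    rw [homogComponent_homog_mul (homogeneousComponent_isHomogeneous e a)]
    split_ifs
    · exact Ideal.mul_mem_left _ _ (hx _)
    · exact Ideal.zero_mem _

theorem CompClosed.mul {I J : Ideal (MvPolynomial σ R)} (hI : CompClosed I)
    (hJ : CompClosed J) : CompClosed (I * J) := by
  intro z hz
  refine Submodule.mul_induction_on hz ?_ ?_
  · intro x hx y hy i
    have hx' : homogeneousComponent i (x * y)
        = ∑ e ∈ Finset.range (x.totalDegree + 1),
            homogeneousComponent i (homogeneousComponent e x * y) := by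
      conv_lhs => rw [← sum_homogeneousComponent x]
      rw [Finset.sum_mul, map_sum]
    rw [hx']
    refine Ideal.sum_mem _ fun e _ => ?_
    rw [homogComponent_homog_mul (homogeneousComponent_isHomogeneous e x)]
    split_ifs
    · exact Ideal.mul_mem_mul (hI x hx e) (hJ y hy _)
    · exact Ideal.zero_mem _
  · intro a b ha hb i
    rw [map_add]; exact Ideal.add_mem _ (ha i) (hb i)

theorem compClosed_top : CompClosed (⊤ : Ideal (MvPolynomial σ R)) := fun _ _ _ => trivial

theorem CompClosed.pow {I : Ideal (MvPolynomial σ R)} (hI : CompClosed I) (m : ℕ) :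
    CompClosed (I ^ m) := by
  induction m with
  | zero => rw [pow_zero, Ideal.one_eq_top]; exact compClosed_top
  | succ m ih => rw [pow_succ]; exact ih.mul hI

theorem compClosed_prod {ι : Type*} (s : Finset ι) (f : ι → Ideal (MvPolynomial σ R))
    (hf : ∀ k ∈ s, CompClosed (f k)) : CompClosed (∏ k ∈ s, f k) := by
  refine Finset.prod_induction f CompClosed (fun a b ha hb => ha.mul hb) ?_ hf
  rw [Ideal.one_eq_top]; exact compClosed_top

theorem span_pow_le (G : Set (MvPolynomial σ R)) (m : ℕ) :
    (Ideal.span G) ^ m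
      ≤ Ideal.span {x | ∃ f : Fin m → MvPolynomial σ R, (∀ c, f c ∈ G) ∧ x = ∏ c, f c} := by
  induction m with
  | zero =>
    intro x _
    have h1 : (1 : MvPolynomial σ R) ∈ Ideal.span
        {x | ∃ f : Fin 0 → MvPolynomial σ R, (∀ c, f c ∈ G) ∧ x = ∏ c, f c} :=
      Ideal.subset_span ⟨Fin.elim0, fun c => c.elim0, by simp⟩
    have := (Ideal.eq_top_iff_one _).mpr h1
    rw [this]; trivial
  | succ m ih =>
    rw [pow_succ]
    calc (Ideal.span G) ^ m * Ideal.span G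
        ≤ Ideal.span {x | ∃ f : Fin m → MvPolynomial σ R, (∀ c, f c ∈ G) ∧ x = ∏ c, f c}
            * Ideal.span G := Ideal.mul_mono ih le_rfl
      _ = Ideal.span ({x | ∃ f : Fin m → MvPolynomial σ R, (∀ c, f c ∈ G) ∧ x = ∏ c, f c} * G) :=
          Ideal.span_mul_span' _ _
      _ ≤ Ideal.span {x | ∃ f : Fin (m+1) → MvPolynomial σ R, (∀ c, f c ∈ G) ∧ x = ∏ c, f c} := by
          rw [Ideal.span_le]
          rintro z hz
          rw [Set.mem_mul] at hz
          obtain ⟨x, ⟨f, hfG, rfl⟩, g, hg, rfl⟩ := hz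
          refine Ideal.subset_span ⟨Fin.cons g f, ?_, ?_⟩
          · intro c
            refine Fin.cases ?_ ?_ c
            · simpa using hg
            · intro c'; simpa using hfG c'
          · rw [Fin.prod_cons, mul_comm]

theorem ideal_pow_mono {I J : Ideal (MvPolynomial σ R)} (h : I ≤ J) (m : ℕ) :
    I ^ m ≤ J ^ m := by
  induction m with
  | zero => simp
  | succ m ih => rw [pow_succ, pow_succ]; exact Ideal.mul_mono ih h

theorem prod_ideal_mono {ι : Type*} (s : Finset ι) (f g : ι → Ideal (MvPolynomial σ R))
    (h : ∀ k ∈ s, f k ≤ g k) : ∏ k ∈ s, f k ≤ ∏ k ∈ s, g k := by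
  classical
  induction s using Finset.induction_on with
  | empty => simp
  | @insert a s ha ih =>
    rw [Finset.prod_insert ha, Finset.prod_insert ha]
    exact Ideal.mul_mono (h a (Finset.mem_insert_self a s))
      (ih fun k hk => h k (Finset.mem_insert_of_mem hk))


noncomputable section

variable {K : Type*} [Field K] {n s t : ℕ}

/-- multiples of partial derivatives lie in the partials ideal -/
theorem mul_pderiv_mem {I : Ideal (MvPolynomial (Fin (n + 1)) K)} {u : MvPolynomial (Fin (n + 1)) K}
    (hu : u ∈ I) (j : Fin (n + 1)) (h : MvPolynomial (Fin (n + 1)) K) :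
    h * pderiv j u ∈ partialsIdeal I :=
  Ideal.mul_mem_left _ _ (Ideal.subset_span ⟨u, hu, j, rfl⟩)

/-- multiples of positive-degree homogeneous members lie in the partials ideal (Euler). -/
theorem mul_mem_partialsIdeal [CharZero K] {I : Ideal (MvPolynomial (Fin (n + 1)) K)}
    {u : MvPolynomial (Fin (n + 1)) K} {e : ℕ}
    (hu : u ∈ I) (hh : u.IsHomogeneous e) (he : e ≠ 0) (h : MvPolynomial (Fin (n + 1)) K) :
    h * u ∈ partialsIdeal I := by
  have heuler := euler_identity hh
  have hKe : ((e : K)) ≠ 0 := Nat.cast_ne_zero.mpr he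
  have hcast : ((e : ℕ) : MvPolynomial (Fin (n+1)) K) = C (e : K) := by
    rw [← MvPolynomial.algebraMap_eq]; exact (map_natCast (algebraMap K _) e).symm
  have hC : C (e:K)⁻¹ * C (e:K) = (1 : MvPolynomial (Fin (n+1)) K) := by
    rw [← map_mul, inv_mul_cancel₀ hKe, map_one]
  have key : (∑ j, (C (e : K)⁻¹ * h * X j) * pderiv j u) = h * u := by
    calc (∑ j, (C (e : K)⁻¹ * h * X j) * pderiv j u)
        = C (e:K)⁻¹ * h * ∑ j, (X j : MvPolynomial (Fin (n+1)) K) * pderiv j u := by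
          rw [Finset.mul_sum]; exact Finset.sum_congr rfl fun j _ => by ring
      _ = C (e:K)⁻¹ * h * ((e : ℕ) • u) := by rw [heuler]
      _ = (C (e:K)⁻¹ * C (e:K)) * (h * u) := by rw [nsmul_eq_mul, hcast]; ring
      _ = h * u := by rw [hC, one_mul]
  rw [← key]
  exact Ideal.sum_mem _ fun j _ => mul_pderiv_mem hu j _

/-- The linear form with coefficient vector `c`.  -/
noncomputable def linForm (c : Fin (n + 1) → K) : MvPolynomial (Fin (n + 1)) K :=
  ∑ j, C (c j) * X j

theorem linForm_isHomogeneous (c : Fin (n + 1) → K) : (linForm c).IsHomogeneous 1 :=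
  IsHomogeneous.sum _ _ _ fun j _ => by
    simpa using (isHomogeneous_C _ (c j)).mul (isHomogeneous_X _ j)

theorem eval_linForm (c w : Fin (n + 1) → K) : eval w (linForm c) = ∑ j, c j * w j := by
  simp [linForm]

theorem pderiv_linForm (c : Fin (n + 1) → K) (j : Fin (n + 1)) :
    pderiv j (linForm c) = C (c j) := by
  rw [linForm, map_sum]
  rw [Finset.sum_eq_single j]
  · rw [pderiv_C_mul, pderiv_X_self, mul_one]
  · intro b _ hbj
    rw [pderiv_C_mul, pderiv_X_of_ne hbj, mul_zero]
  · intro h; exact absurd (Finset.mem_univ j) h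

theorem linForm_sum {ι : Type*} (s : Finset ι) (f : ι → (Fin (n + 1) → K)) :
    linForm (∑ c ∈ s, f c) = ∑ c ∈ s, linForm (f c) := by
  unfold linForm
  rw [Finset.sum_comm]
  refine Finset.sum_congr rfl fun j _ => ?_
  have hap : (∑ c ∈ s, f c) j = ∑ c ∈ s, f c j := by simp
  rw [hap, map_sum, Finset.sum_mul]

theorem linForm_mem_pointIdeal {c v : Fin (n + 1) → K} (h : ∑ j, c j * v j = 0) :
    linForm c ∈ pointIdeal v :=
  Ideal.subset_span ⟨⟨1, linForm_isHomogeneous c⟩, by rw [eval_linForm]; exact h⟩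

/-- homogeneous scaling under `aeval`. -/
theorem aeval_C_mul_eta {σ : Type*} {R : Type*} [CommSemiring R] {F : MvPolynomial σ R} {d : ℕ}
    (hF : F.IsHomogeneous d) (w : σ → R) (η : MvPolynomial σ R) :
    aeval (fun j => C (w j) * η) F = C (eval w F) * η ^ d := by
  conv_lhs => rw [F.as_sum]
  rw [map_sum]
  have key : ∀ u ∈ F.support, aeval (fun j => C (w j) * η) (monomial u (coeff u F))
      = C (coeff u F * ∏ j ∈ u.support, w j ^ u j) * η ^ d := by
    intro u hu
    have hdeg : ∑ j ∈ u.support, u j = d := by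
      have h1 : u.degree = d := by
        by_contra hne
        exact mem_support_iff.mp hu (hF.coeff_eq_zero hne)
      rw [← h1]; rfl
    rw [aeval_monomial, MvPolynomial.algebraMap_eq]
    rw [Finsupp.prod]
    have : ∀ j ∈ u.support, (C (w j) * η) ^ u j = C (w j ^ u j) * η ^ u j := by
      intro j _
      rw [mul_pow, map_pow]
    rw [Finset.prod_congr rfl this, Finset.prod_mul_distrib, ← map_prod,
      Finset.prod_pow_eq_pow_sum, hdeg, map_mul]
    ring
  rw [Finset.sum_congr rfl key, ← Finset.sum_mul, ← map_sum, eval_eq]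

/-- Every homogeneous polynomial vanishing at `v ≠ 0` lies in the ideal generated by the
linear forms vanishing at `v`. -/
theorem pointIdeal_le_linSpan (v : Fin (n + 1) → K) (hv : v ≠ 0) :
    pointIdeal v ≤
      Ideal.span {f | ∃ c : Fin (n + 1) → K, (∑ j, c j * v j) = 0 ∧ f = linForm c} := by
  set lin : Ideal (MvPolynomial (Fin (n + 1)) K) :=
    Ideal.span {f | ∃ c : Fin (n + 1) → K, (∑ j, c j * v j) = 0 ∧ f = linForm c} with hlin
  rw [pointIdeal, Ideal.span_le]
  rintro F ⟨⟨d, hFd⟩, hFv⟩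
  obtain ⟨j₀, hj₀⟩ : ∃ j₀, v j₀ ≠ 0 := by
    by_contra h; push_neg at h; exact hv (funext h)
  set η : MvPolynomial (Fin (n + 1)) K := C (v j₀)⁻¹ * X j₀ with hη
  have hy : ∀ j, (X j - C (v j) * η) ∈ lin := by
    intro j
    apply Ideal.subset_span
    refine ⟨fun j' => (if j' = j then 1 else 0) - v j * (v j₀)⁻¹ * (if j' = j₀ then 1 else 0),
      ?_, ?_⟩
    · calc (∑ j', ((if j' = j then (1:K) else 0)
              - v j * (v j₀)⁻¹ * (if j' = j₀ then 1 else 0)) * v j')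
          = ∑ j', ((if j' = j then v j' else 0)
              - (if j' = j₀ then v j * (v j₀)⁻¹ * v j' else 0)) := by
            refine Finset.sum_congr rfl fun j' _ => ?_
            split_ifs <;> ring
        _ = v j - v j * (v j₀)⁻¹ * v j₀ := by
            rw [Finset.sum_sub_distrib, Finset.sum_ite_eq' Finset.univ j (fun j' => v j'),
              Finset.sum_ite_eq' Finset.univ j₀ (fun j' => v j * (v j₀)⁻¹ * v j')]
            simp
        _ = 0 := by field_simp; simp
    · calc X j - C (v j) * η
          = X j - C (v j * (v j₀)⁻¹) * X j₀ := by rw [hη, map_mul]; ring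
        _ = (∑ j', if j' = j then (X j' : MvPolynomial (Fin (n+1)) K) else 0)
            - C (v j * (v j₀)⁻¹) * ∑ j', if j' = j₀ then (X j' : MvPolynomial (Fin (n+1)) K) else 0 := by
            rw [Finset.sum_ite_eq' Finset.univ j (fun j' => (X j' : MvPolynomial (Fin (n+1)) K)),
              Finset.sum_ite_eq' Finset.univ j₀ (fun j' => (X j' : MvPolynomial (Fin (n+1)) K))]
            simp
        _ = linForm (fun j' => (if j' = j then 1 else 0)
              - v j * (v j₀)⁻¹ * (if j' = j₀ then 1 else 0)) := by
            unfold linForm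
            rw [Finset.mul_sum, ← Finset.sum_sub_distrib]
            refine Finset.sum_congr rfl fun j' _ => ?_
            rw [map_sub, map_mul, map_mul]
            split_ifs <;> simp <;> ring
  set π := Ideal.Quotient.mkₐ K lin with hπdef
  have hπ0 : π F = 0 := by
    calc π F = π (aeval X F) := by rw [aeval_X_left_apply]
      _ = aeval (fun j => π (X j)) F := by rw [← comp_aeval]; rfl
      _ = aeval (fun j => π (C (v j) * η)) F := by
          refine congrArg (fun g => aeval g F) (funext fun j => ?_)
          have : π (X j) - π (C (v j) * η) = π (X j - C (v j) * η) := (map_sub π _ _).symm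
          have h2 : π (X j - C (v j) * η) = 0 := by
            rw [hπdef, Ideal.Quotient.mkₐ_eq_mk, Ideal.Quotient.eq_zero_iff_mem]
            exact hy j
          have := sub_eq_zero.mp (this.trans h2)
          exact this
      _ = π (aeval (fun j => C (v j) * η) F) := by rw [← comp_aeval]; rfl
      _ = π (C (eval v F) * η ^ d) := by rw [aeval_C_mul_eta hFd]
      _ = 0 := by rw [hFv, map_zero, zero_mul, map_zero]
  rw [hπdef, Ideal.Quotient.mkₐ_eq_mk] at hπ0
  exact (Ideal.Quotient.eq_zero_iff_mem).mp hπ0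

/-- The product ideal `I_1^{ν_1} ⋯ I_t^{ν_t}` with an extra `ε k` added to exponents. -/
noncomputable def bigJ (v : Fin s → Fin (n + 1) → K) (T : Fin t → Finset (Fin s))
    (e : Fin t → ℕ) : Ideal (MvPolynomial (Fin (n + 1)) K) :=
  ∏ k, (⨅ j ∈ T k, pointIdeal (v j)) ^ e k

/-- auxiliary product of linear forms through the other points -/
noncomputable def CqD (T : Fin t → Finset (Fin s)) (e : Fin t → ℕ)
    (cf : Fin s → Fin s → (Fin (n + 1) → K)) (q : Fin s) : MvPolynomial (Fin (n + 1)) K :=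
  ∏ k, (∏ q' ∈ (T k).erase q, linForm (cf q' q)) ^ e k

noncomputable def NqD (T : Fin t → Finset (Fin s)) (e : Fin t → ℕ) (q : Fin s) : ℕ :=
  ∑ k, ((T k).erase q).card * e k

theorem CqD_isHomogeneous (T : Fin t → Finset (Fin s)) (e : Fin t → ℕ)
    (cf : Fin s → Fin s → (Fin (n + 1) → K)) (q : Fin s) :
    (CqD T e cf q).IsHomogeneous (NqD T e q) := by
  unfold CqD NqD
  refine IsHomogeneous.prod _ _ _ fun k _ => ?_
  have hbase : (∏ q' ∈ (T k).erase q, linForm (cf q' q)).IsHomogeneous ((T k).erase q).card := by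
    have := IsHomogeneous.prod ((T k).erase q) (fun q' => linForm (cf q' q)) (fun _ => 1)
      (fun q' _ => linForm_isHomogeneous _)
    simpa using this
  exact hbase.pow (e k)

theorem eval_CqD_ne_zero (T : Fin t → Finset (Fin s)) (e : Fin t → ℕ)
    (cf : Fin s → Fin s → (Fin (n + 1) → K)) (q : Fin s) (v : Fin s → Fin (n + 1) → K)
    (hnz : ∀ q', q' ≠ q → ∑ j, cf q' q j * v q j ≠ 0) :
    eval (v q) (CqD T e cf q) ≠ 0 := by
  unfold CqD
  rw [map_prod]
  rw [Finset.prod_ne_zero_iff]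
  intro k _
  rw [map_pow]
  apply pow_ne_zero
  rw [map_prod, Finset.prod_ne_zero_iff]
  intro q' hq'
  rw [eval_linForm]
  exact hnz q' (Finset.ne_of_mem_erase hq')

theorem eval_CqD_eq_zero [NeZero t] (T : Fin t → Finset (Fin s)) (e : Fin t → ℕ)
    (he0 : e 0 ≠ 0)
    (cf : Fin s → Fin s → (Fin (n + 1) → K)) (q : Fin s) (v : Fin s → Fin (n + 1) → K)
    (horth : ∀ q', q' ≠ q → ∑ j, cf q' q j * v q' j = 0)
    {q₁ : Fin s} (hq₁ : q₁ ∈ T 0) (hne : q₁ ≠ q) :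
    eval (v q₁) (CqD T e cf q) = 0 := by
  unfold CqD
  rw [map_prod]
  apply Finset.prod_eq_zero (Finset.mem_univ (0 : Fin t))
  rw [map_pow]
  apply pow_eq_zero_iff he0 |>.mpr
  rw [map_prod]
  apply Finset.prod_eq_zero (Finset.mem_erase.mpr ⟨hne, hq₁⟩)
  rw [eval_linForm]
  exact horth q₁ hne

/-- The crucial element `ℓ^{m+1} C_q` of `J'`. -/
theorem u_mem_bigJ' [NeZero t] (v : Fin s → Fin (n + 1) → K) (T : Fin t → Finset (Fin s))
    (ν : Fin t → ℕ) (cf : Fin s → Fin s → (Fin (n + 1) → K)) (q : Fin s)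
    (horth : ∀ q', q' ≠ q → ∑ j, cf q' q j * v q' j = 0)
    (hq0 : q ∈ T 0)
    {c : Fin (n + 1) → K} (hc : ∑ j, c j * v q j = 0) :
    (linForm c) ^ ((∑ k, if q ∈ T k then ν k else 0) + 1)
        * CqD T (fun k => ν k + if k.val = 0 then 1 else 0) cf q
      ∈ bigJ v T (fun k => ν k + if k.val = 0 then 1 else 0) := by
  set e : Fin t → ℕ := fun k => ν k + if k.val = 0 then 1 else 0 with hedef
  have hsplit : (linForm c) ^ ((∑ k, if q ∈ T k then ν k else 0) + 1) * CqD T e cf q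
      = ∏ k, ((linForm c) ^ (if q ∈ T k then 1 else 0)
          * ∏ q' ∈ (T k).erase q, linForm (cf q' q)) ^ e k := by
    have h1 : ∀ k, ((linForm c) ^ (if q ∈ T k then 1 else 0)
          * ∏ q' ∈ (T k).erase q, linForm (cf q' q)) ^ e k
        = (linForm c) ^ ((if q ∈ T k then 1 else 0) * e k)
          * (∏ q' ∈ (T k).erase q, linForm (cf q' q)) ^ e k := by
      intro k; rw [mul_pow, pow_mul]
    rw [Finset.prod_congr rfl fun k _ => h1 k, Finset.prod_mul_distrib,
      Finset.prod_pow_eq_pow_sum]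
    have h2 : ∑ k, (if q ∈ T k then 1 else 0) * e k
        = (∑ k, if q ∈ T k then ν k else 0) + 1 := by
      have h3 : ∀ k : Fin t, (if q ∈ T k then 1 else 0) * e k
          = (if q ∈ T k then ν k else 0) + (if k = 0 then 1 else 0) := by
        intro k
        by_cases hk : q ∈ T k
        · by_cases hk0 : k = 0
          · subst hk0; simp [hedef, hq0]
          · have hv0 : ¬ (k.val = 0) := fun h => hk0 (Fin.ext (by rw [h, Fin.val_zero]))
            simp [hedef, hk, hk0, hv0]
        · by_cases hk0 : k = 0
          · exact absurd (hk0 ▸ hq0) hk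
          · simp [hedef, hk, hk0]

      rw [Finset.sum_congr rfl fun k _ => h3 k, Finset.sum_add_distrib,
        Finset.sum_ite_eq' Finset.univ (0 : Fin t) (fun _ => 1)]
      simp
    rw [h2]
    unfold CqD
    rfl
  rw [hsplit]
  unfold bigJ
  refine Ideal.prod_mem_prod fun k _ => ?_
  refine Ideal.pow_mem_pow ?_ _
  refine Ideal.mem_iInf.mpr fun j => Ideal.mem_iInf.mpr fun hj => ?_
  by_cases hjq : j = q
  · rw [hjq] at hj ⊢
    rw [if_pos hj, pow_one]
    exact Ideal.mul_mem_right _ _ (linForm_mem_pointIdeal hc)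
  · have hjmem : j ∈ (T k).erase q := Finset.mem_erase.mpr ⟨hjq, hj⟩
    have hfac : (∏ q' ∈ (T k).erase q, linForm (cf q' q)) ∈ pointIdeal (v j) := by
      rw [← Finset.mul_prod_erase _ _ hjmem]
      exact Ideal.mul_mem_right _ _ (linForm_mem_pointIdeal (horth j hjq))
    exact Ideal.mul_mem_left _ _ hfac

end
end Aux

section Key

variable {K : Type*} [Field K] [CharZero K] {n s t : ℕ}

theorem pow_Cq_mem [NeZero t] (v : Fin s → Fin (n + 1) → K) (T : Fin t → Finset (Fin s))
    (ν : Fin t → ℕ) (cf : Fin s → Fin s → (Fin (n + 1) → K)) (q : Fin s)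
    (horth : ∀ q', q' ≠ q → ∑ j, cf q' q j * v q' j = 0)
    (hq0 : q ∈ T 0) (hν0 : 1 ≤ ν 0)
    {c : Fin (n + 1) → K} (hc : ∑ j, c j * v q j = 0) (h : MvPolynomial (Fin (n + 1)) K) :
    h * ((linForm c) ^ (∑ k, if q ∈ T k then ν k else 0)
        * (CqD T (fun k => ν k + if k.val = 0 then 1 else 0) cf q) ^ 2)
      ∈ partialsIdeal (bigJ v T (fun k => ν k + if k.val = 0 then 1 else 0)) := by
  classical
  set m : ℕ := ∑ k, if q ∈ T k then ν k else 0 with hm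
  have hm1 : 1 ≤ m := by
    have := Finset.single_le_sum (f := fun k => if q ∈ T k then ν k else 0)
      (fun k _ => Nat.zero_le _) (Finset.mem_univ (0 : Fin t))
    simp only [if_pos hq0] at this
    omega
  set Cq := CqD T (fun k => ν k + if k.val = 0 then 1 else 0) cf q with hCqdef
  set J' := bigJ v T (fun k => ν k + if k.val = 0 then 1 else 0) with hJ'def
  by_cases hc0 : c = 0
  · have hl0 : linForm c = 0 := by subst hc0; simp [linForm]
    rw [hl0, zero_pow (by omega : m ≠ 0), zero_mul, mul_zero]
    exact Ideal.zero_mem _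
  · obtain ⟨j₁, hj₁⟩ : ∃ j, c j ≠ 0 := by
      by_contra hcon; push_neg at hcon; exact hc0 (funext hcon)
    have hu : linForm c ^ (m + 1) * Cq ∈ J' :=
      u_mem_bigJ' v T ν cf q horth hq0 hc
    have huhom : (linForm c ^ (m + 1) * Cq).IsHomogeneous
        ((m + 1) + NqD T (fun k => ν k + if k.val = 0 then 1 else 0) q) := by
      refine IsHomogeneous.mul ?_ (CqD_isHomogeneous _ _ _ _)
      simpa using (linForm_isHomogeneous c).pow (m + 1)
    have h1 : (h * Cq) * pderiv j₁ (linForm c ^ (m + 1) * Cq) ∈ partialsIdeal J' :=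
      mul_pderiv_mem hu j₁ _
    have h2 : (h * pderiv j₁ Cq) * (linForm c ^ (m + 1) * Cq) ∈ partialsIdeal J' :=
      mul_mem_partialsIdeal hu huhom (by omega) _
    have h3 := Ideal.sub_mem _ h1 h2
    have hcast : ((m + 1 : ℕ) : MvPolynomial (Fin (n + 1)) K) = C ((m + 1 : ℕ) : K) := by
      rw [← MvPolynomial.algebraMap_eq]; exact (map_natCast (algebraMap K _) (m + 1)).symm
    have hkey : (h * Cq) * pderiv j₁ (linForm c ^ (m + 1) * Cq)
          - (h * pderiv j₁ Cq) * (linForm c ^ (m + 1) * Cq)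
        = (C (((m + 1 : ℕ) : K) * c j₁)) * (h * (linForm c ^ m * Cq ^ 2)) := by
      rw [pderiv_mul, pderiv_pow, pderiv_linForm, Nat.add_sub_cancel, hcast, map_mul]
      ring
    rw [hkey] at h3
    have hne : (((m + 1 : ℕ) : K) * c j₁) ≠ 0 :=
      mul_ne_zero (Nat.cast_ne_zero.mpr (by omega)) hj₁
    have h4 := Ideal.mul_mem_left _ (C ((((m + 1 : ℕ) : K) * c j₁)⁻¹)) h3
    rw [← mul_assoc, ← map_mul, inv_mul_cancel₀ hne, map_one, one_mul] at h4
    exact h4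

theorem prod_Cq_mem [NeZero t] (v : Fin s → Fin (n + 1) → K) (T : Fin t → Finset (Fin s))
    (ν : Fin t → ℕ) (cf : Fin s → Fin s → (Fin (n + 1) → K)) (q : Fin s)
    (horth : ∀ q', q' ≠ q → ∑ j, cf q' q j * v q' j = 0)
    (hq0 : q ∈ T 0) (hν0 : 1 ≤ ν 0) (m : ℕ) (hmeq : m = ∑ k, if q ∈ T k then ν k else 0)
    (f : Fin m → (Fin (n + 1) → K))
    (hf : ∀ a, ∑ j, f a j * v q j = 0) :
    (CqD T (fun k => ν k + if k.val = 0 then 1 else 0) cf q) ^ 2 * (∏ a, linForm (f a))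
      ∈ partialsIdeal (bigJ v T (fun k => ν k + if k.val = 0 then 1 else 0)) := by
  classical
  set Cq := CqD T (fun k => ν k + if k.val = 0 then 1 else 0) cf q with hCqdef
  have hpolar := polar_identity m (fun a => linForm (f a))
  have hsum : ∀ sub : Finset (Fin m), (∑ a ∈ sub, linForm (f a)) = linForm (∑ a ∈ sub, f a) :=
    fun sub => (linForm_sum sub f).symm
  have horths : ∀ sub : Finset (Fin m), ∑ j, (∑ a ∈ sub, f a) j * v q j = 0 := by
    intro sub
    have : ∀ j, (∑ a ∈ sub, f a) j = ∑ a ∈ sub, f a j := fun j => by simp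
    rw [Finset.sum_congr rfl fun j _ => by rw [this j, Finset.sum_mul]]
    rw [Finset.sum_comm]
    exact Finset.sum_eq_zero fun a _ => hf a
  have hbig : Cq ^ 2 * ((m.factorial : MvPolynomial (Fin (n + 1)) K) * ∏ a, linForm (f a))
      ∈ partialsIdeal (bigJ v T (fun k => ν k + if k.val = 0 then 1 else 0)) := by
    rw [hpolar, Finset.mul_sum]
    refine Ideal.sum_mem _ fun sub _ => ?_
    have hmem := pow_Cq_mem v T ν cf q horth hq0 hν0 (horths sub)
      ((-1 : MvPolynomial (Fin (n + 1)) K) ^ (m - sub.card))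
    rw [← hmeq] at hmem
    have heq : (-1 : MvPolynomial (Fin (n + 1)) K) ^ (m - sub.card)
          * (linForm (∑ a ∈ sub, f a) ^ m * Cq ^ 2)
        = Cq ^ 2 * ((-1) ^ (m - sub.card) * (∑ a ∈ sub, linForm (f a)) ^ m) := by
      rw [hsum sub]; ring
    rw [heq] at hmem
    exact hmem
  have hfne : ((m.factorial : ℕ) : K) ≠ 0 :=
    Nat.cast_ne_zero.mpr (Nat.factorial_ne_zero m)
  have hcast : ((m.factorial : ℕ) : MvPolynomial (Fin (n + 1)) K) = C ((m.factorial : ℕ) : K) := by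
    rw [← MvPolynomial.algebraMap_eq]; exact (map_natCast (algebraMap K _) _).symm
  have h4 := Ideal.mul_mem_left _ (C (((m.factorial : ℕ) : K))⁻¹) hbig
  have heq2 : C (((m.factorial : ℕ) : K))⁻¹
        * (Cq ^ 2 * ((m.factorial : MvPolynomial (Fin (n + 1)) K) * ∏ a, linForm (f a)))
      = Cq ^ 2 * ∏ a, linForm (f a) := by
    rw [hcast]
    rw [show C (((m.factorial : ℕ) : K))⁻¹ * (Cq ^ 2 * (C ((m.factorial : ℕ) : K) * ∏ a, linForm (f a)))
      = (C (((m.factorial : ℕ) : K))⁻¹ * C ((m.factorial : ℕ) : K)) * (Cq ^ 2 * ∏ a, linForm (f a)) from by ring]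
    rw [← map_mul, inv_mul_cancel₀ hfne, map_one, one_mul]
  rw [heq2] at h4
  exact h4

theorem J_mul_Cq_sq_mem [NeZero t] (v : Fin s → Fin (n + 1) → K) (T : Fin t → Finset (Fin s))
    (ν : Fin t → ℕ) (cf : Fin s → Fin s → (Fin (n + 1) → K)) (q : Fin s)
    (horth : ∀ q', q' ≠ q → ∑ j, cf q' q j * v q' j = 0)
    (hq0 : q ∈ T 0) (hν0 : 1 ≤ ν 0) (hvq : v q ≠ 0) :
    ∀ F ∈ bigJ v T ν,
      (CqD T (fun k => ν k + if k.val = 0 then 1 else 0) cf q) ^ 2 * F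
        ∈ partialsIdeal (bigJ v T (fun k => ν k + if k.val = 0 then 1 else 0)) := by
  classical
  set m : ℕ := ∑ k, if q ∈ T k then ν k else 0 with hm
  set Cq := CqD T (fun k => ν k + if k.val = 0 then 1 else 0) cf q with hCqdef
  set DJ' := partialsIdeal (bigJ v T (fun k => ν k + if k.val = 0 then 1 else 0)) with hDJ'
  set Wq : Ideal (MvPolynomial (Fin (n + 1)) K) :=
    { carrier := {F | Cq ^ 2 * F ∈ DJ'}
      zero_mem' := by simp only [Set.mem_setOf_eq, mul_zero]; exact Ideal.zero_mem _
      add_mem' := by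
        intro a b ha hb
        simp only [Set.mem_setOf_eq, mul_add]
        exact Ideal.add_mem _ ha hb
      smul_mem' := by
        intro r x hx
        simp only [Set.mem_setOf_eq, smul_eq_mul]
        rw [show Cq ^ 2 * (r * x) = r * (Cq ^ 2 * x) from by ring]
        exact Ideal.mul_mem_left _ _ hx } with hWq
  intro F hF
  suffices hle : bigJ v T ν ≤ Wq by exact hle hF
  set lin : Ideal (MvPolynomial (Fin (n + 1)) K) :=
    Ideal.span {g | ∃ c : Fin (n + 1) → K, (∑ j, c j * v q j) = 0 ∧ g = linForm c} with hlin
  have step1 : bigJ v T ν ≤ lin ^ m := by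
    unfold bigJ
    calc ∏ k, (⨅ j ∈ T k, pointIdeal (v j)) ^ ν k
        ≤ ∏ k, lin ^ (if q ∈ T k then ν k else 0) := by
          refine prod_ideal_mono _ _ _ fun k _ => ?_
          by_cases hqk : q ∈ T k
          · rw [if_pos hqk]
            refine ideal_pow_mono ?_ _
            calc (⨅ j ∈ T k, pointIdeal (v j)) ≤ pointIdeal (v q) := by
                  exact le_trans (iInf_le _ q) (iInf_le _ hqk)
              _ ≤ lin := pointIdeal_le_linSpan (v q) hvq
          · rw [if_neg hqk, pow_zero, Ideal.one_eq_top]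
            exact le_top
      _ = lin ^ m := Finset.prod_pow_eq_pow_sum _ _ _
  have step2 : lin ^ m ≤ Wq := by
    refine le_trans (span_pow_le _ m) ?_
    rw [Ideal.span_le]
    rintro x ⟨g, hg, rfl⟩
    choose cvec hc1 hc2 using hg
    have : ∏ a, g a = ∏ a, linForm (cvec a) := Finset.prod_congr rfl fun a _ => hc2 a
    rw [this]
    show Cq ^ 2 * ∏ a, linForm (cvec a) ∈ DJ'
    exact prod_Cq_mem v T ν cf q horth hq0 hν0 m hm cvec hc1
  exact le_trans step1 step2

end Key

theorem chain_product_subset_partials_in_large_degrees {K : Type*} [Field K] [CharZero K]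
    (n s t : ℕ) (ht : 2 ≤ t)
    (v : Fin s → (Fin (n + 1) → K))
    (hv0 : ∀ j, v j ≠ 0)
    (hdist : ∀ i j, i ≠ j → ∀ c : K, v i ≠ c • v j)
    (T : Fin t → Finset (Fin s))
    (hTne : ∀ k, (T k).Nonempty)
    (hchain : ∀ k l : Fin t, k < l → T l ⊂ T k)
    (ν : Fin t → ℕ) (hν : ∀ k, 1 ≤ ν k) :
    ∃ i₀ : ℕ, ∀ i ≥ i₀, ∀ F : MvPolynomial (Fin (n + 1)) K, F.IsHomogeneous i →
      F ∈ (∏ k : Fin t, (⨅ j ∈ T k, pointIdeal (v j)) ^ (ν k)) →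
      F ∈ partialsIdeal
        (∏ k : Fin t,
          (⨅ j ∈ T k, pointIdeal (v j)) ^ (ν k + if k.val = 0 then 1 else 0)) := by
  classical
  haveI : NeZero t := ⟨by omega⟩
  -- separating linear forms between distinct points
  have hLex : ∀ q' q : Fin s, q' ≠ q → ∃ c : Fin (n + 1) → K,
      (∑ j, c j * v q' j = 0) ∧ (∑ j, c j * v q j ≠ 0) := by
    intro q' q hne
    obtain ⟨j₁, hj₁⟩ : ∃ j, v q' j ≠ 0 := by
      by_contra hcon; push_neg at hcon; exact hv0 q' (funext hcon)
    have hexists : ∃ j, v q j * v q' j₁ - v q j₁ * v q' j ≠ 0 := by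
      by_contra hcon; push_neg at hcon
      apply hdist q q' (Ne.symm hne) (v q j₁ * (v q' j₁)⁻¹)
      funext j
      have h1 : v q j * v q' j₁ = v q j₁ * v q' j := sub_eq_zero.mp (hcon j)
      have h2 : ((v q j₁ * (v q' j₁)⁻¹) • v q') j = v q j₁ * (v q' j₁)⁻¹ * v q' j := by
        simp [Pi.smul_apply, smul_eq_mul]
      rw [h2]
      field_simp
      linear_combination h1
    obtain ⟨j₂, hj₂⟩ := hexists
    have hexp : ∀ w : Fin (n + 1) → K,
        ∑ j', ((if j' = j₂ then v q' j₁ else 0) - (if j' = j₁ then v q' j₂ else 0)) * w j'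
          = v q' j₁ * w j₂ - v q' j₂ * w j₁ := by
      intro w
      have hstep : ∀ j' ∈ (Finset.univ : Finset (Fin (n + 1))),
          ((if j' = j₂ then v q' j₁ else 0) - (if j' = j₁ then v q' j₂ else 0)) * w j'
            = (if j' = j₂ then v q' j₁ * w j' else 0)
              - (if j' = j₁ then v q' j₂ * w j' else 0) := by
        intro j' _
        split_ifs <;> ring
      rw [Finset.sum_congr rfl hstep, Finset.sum_sub_distrib,
        Finset.sum_ite_eq' Finset.univ j₂ (fun j' => v q' j₁ * w j'),
        Finset.sum_ite_eq' Finset.univ j₁ (fun j' => v q' j₂ * w j')]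
      simp
    refine ⟨fun j' => (if j' = j₂ then v q' j₁ else 0) - (if j' = j₁ then v q' j₂ else 0), ?_, ?_⟩
    · rw [hexp]; ring
    · rw [hexp]
      have heq : v q' j₁ * v q j₂ - v q' j₂ * v q j₁
          = v q j₂ * v q' j₁ - v q j₁ * v q' j₂ := by ring
      rw [heq]; exact hj₂
  choose cL hcL1 hcL2 using hLex
  set cf : Fin s → Fin s → (Fin (n + 1) → K) :=
    fun q' q => if h : q' ≠ q then cL q' q h else 0 with hcfdef
  have hcf1 : ∀ (q q' : Fin s), q' ≠ q → ∑ j, cf q' q j * v q' j = 0 := by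
    intro q q' h
    rw [hcfdef]; simp only [dif_pos h]; exact hcL1 q' q h
  have hcf2 : ∀ (q q' : Fin s), q' ≠ q → ∑ j, cf q' q j * v q j ≠ 0 := by
    intro q q' h
    rw [hcfdef]; simp only [dif_pos h]; exact hcL2 q' q h
  set e : Fin t → ℕ := fun k => ν k + if k.val = 0 then 1 else 0 with hedef
  set J : Ideal (MvPolynomial (Fin (n + 1)) K) := bigJ v T ν with hJdef
  set J' : Ideal (MvPolynomial (Fin (n + 1)) K) := bigJ v T e with hJ'def
  set Cq : Fin s → MvPolynomial (Fin (n + 1)) K := fun q => CqD T e cf q with hCqdef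
  set Nq : Fin s → ℕ := fun q => NqD T e q with hNqdef
  -- J' = I₀ * J
  have hI0J : J' = (⨅ j ∈ T 0, pointIdeal (v j)) * J := by
    rw [hJ'def, hJdef]
    unfold bigJ
    calc ∏ k, (⨅ j ∈ T k, pointIdeal (v j)) ^ e k
        = ∏ k, ((⨅ j ∈ T k, pointIdeal (v j)) ^ ν k
            * (⨅ j ∈ T k, pointIdeal (v j)) ^ (if k.val = 0 then 1 else 0)) := by
          refine Finset.prod_congr rfl fun k _ => ?_
          rw [← pow_add]
      _ = (∏ k, (⨅ j ∈ T k, pointIdeal (v j)) ^ ν k)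
          * ∏ k, (⨅ j ∈ T k, pointIdeal (v j)) ^ (if k.val = 0 then 1 else 0) :=
          Finset.prod_mul_distrib
      _ = (⨅ j ∈ T 0, pointIdeal (v j)) * ∏ k, (⨅ j ∈ T k, pointIdeal (v j)) ^ ν k := by
          have hsingle : (∏ k, (⨅ j ∈ T k, pointIdeal (v j)) ^ (if (k : Fin t).val = 0 then 1 else 0))
              = (⨅ j ∈ T 0, pointIdeal (v j)) := by
            rw [Finset.prod_eq_single (0 : Fin t)
              (fun k _ hk => by rw [if_neg (show ¬ k.val = 0 from fun h => hk (Fin.ext (by rw [h, Fin.val_zero]))), pow_zero])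
              (fun h => absurd (Finset.mem_univ _) h)]
            simp
          rw [hsingle, mul_comm]
  -- J is component-closed
  have hcc : CompClosed J := by
    rw [hJdef]; unfold bigJ
    refine compClosed_prod _ _ fun k _ => CompClosed.pow ?_ _
    intro x hx i
    refine Ideal.mem_iInf.mpr fun j => Ideal.mem_iInf.mpr fun hj => ?_
    have hxj : x ∈ pointIdeal (v j) := Ideal.mem_iInf.mp (Ideal.mem_iInf.mp hx j) hj
    exact compClosed_span (fun f hf => hf.1) x hxj i
  -- Lagrange interpolation decomposition in high degrees
  have hLag : ∀ e' : ℕ, (∀ q ∈ T 0, 2 * Nq q ≤ e') →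
      ∀ h : MvPolynomial (Fin (n + 1)) K, h.IsHomogeneous e' →
      ∃ (a : MvPolynomial (Fin (n + 1)) K) (sf : Fin s → MvPolynomial (Fin (n + 1)) K),
        a ∈ (⨅ j ∈ T 0, pointIdeal (v j)) ∧ a.IsHomogeneous e' ∧
        h = a + ∑ q ∈ T 0, (Cq q) ^ 2 * sf q := by
    intro e' hbound h hh
    have hjxe : ∀ q : Fin s, ∃ j, v q j ≠ 0 := fun q => by
      by_contra hcon; push_neg at hcon; exact hv0 q (funext hcon)
    choose jx hjx using hjxe
    set sf : Fin s → MvPolynomial (Fin (n + 1)) K := fun q =>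
      C (eval (v q) h * ((eval (v q) (Cq q)) ^ 2 * (v q (jx q)) ^ (e' - 2 * Nq q))⁻¹)
        * X (jx q) ^ (e' - 2 * Nq q) with hsfdef
    have hterm_hom : ∀ q ∈ T 0, ((Cq q) ^ 2 * sf q).IsHomogeneous e' := by
      intro q hq
      have h1 : ((Cq q) ^ 2).IsHomogeneous (Nq q * 2) := (CqD_isHomogeneous T e cf q).pow 2
      have h2 : (sf q).IsHomogeneous (e' - 2 * Nq q) := by
        rw [hsfdef]
        refine IsHomogeneous.C_mul ?_ _
        simpa using (isHomogeneous_X K (jx q)).pow (e' - 2 * Nq q)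
      have h3 := h1.mul h2
      have hb := hbound q hq
      rwa [show Nq q * 2 + (e' - 2 * Nq q) = e' from by omega] at h3
    have heval : ∀ j₀ ∈ T 0, ∀ q ∈ T 0,
        eval (v j₀) ((Cq q) ^ 2 * sf q) = if q = j₀ then eval (v j₀) h else 0 := by
      intro j₀ hj₀ q hq
      by_cases hqj : q = j₀
      · subst hqj
        rw [if_pos rfl, hsfdef]
        simp only [map_mul, map_pow, eval_C, eval_X]
        have hC : eval (v q) (Cq q) ≠ 0 :=
          eval_CqD_ne_zero T e cf q v (fun q' hq' => hcf2 q q' hq')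
        have hX : v q (jx q) ≠ 0 := hjx q
        field_simp
      · rw [if_neg hqj]
        have hz : eval (v j₀) (Cq q) = 0 := by
          refine eval_CqD_eq_zero T e (by rw [hedef]; simp) cf q v
            (fun q' hq' => hcf1 q q' hq') hj₀ (fun hcon => hqj hcon.symm)
        rw [map_mul, map_pow, hz]
        norm_num
    refine ⟨h - ∑ q ∈ T 0, (Cq q) ^ 2 * sf q, sf, ?_, ?_, by ring⟩
    · refine Ideal.mem_iInf.mpr fun j₀ => Ideal.mem_iInf.mpr fun hj₀ => ?_
      refine Ideal.subset_span ⟨⟨e', hh.sub (IsHomogeneous.sum _ _ _ hterm_hom)⟩, ?_⟩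
      rw [map_sub, map_sum]
      rw [Finset.sum_congr rfl (heval j₀ hj₀)]
      rw [Finset.sum_ite_eq' (T 0) j₀ (fun _ => eval (v j₀) h), if_pos hj₀, sub_self]
    · exact hh.sub (IsHomogeneous.sum _ _ _ hterm_hom)
  -- finite homogeneous-ish generators of J
  obtain ⟨G, hG⟩ : J.FG := IsNoetherian.noetherian J
  set D : ℕ := G.sup (fun g => g.totalDegree) with hDdef
  set MN : ℕ := Finset.univ.sup (fun q : Fin s => 2 * Nq q) with hMNdef
  refine ⟨D + MN + 1, ?_⟩
  intro i hi F hFhom hFJ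
  have hFJ' : F ∈ J := hFJ
  rw [← hG] at hFJ'
  obtain ⟨A, -, hA⟩ := Submodule.mem_span_finset.mp hFJ'
  -- decompose F into homogeneous pieces
  have hF2 : F = ∑ g ∈ G, ∑ d ∈ Finset.range (g.totalDegree + 1),
      (if d ≤ i then homogeneousComponent d g * homogeneousComponent (i - d) (A g) else 0) := by
    have h0 : F = homogeneousComponent i F := by
      rw [homogeneousComponent_of_mem hFhom, if_pos rfl]
    calc F = homogeneousComponent i F := h0
      _ = homogeneousComponent i (∑ g ∈ G, A g * g) := by
          rw [show ∑ g ∈ G, A g * g = F from by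
            rw [← hA]
            exact Finset.sum_congr rfl fun g _ => by rw [smul_eq_mul]]
      _ = ∑ g ∈ G, homogeneousComponent i (A g * g) := map_sum _ _ _
      _ = ∑ g ∈ G, ∑ d ∈ Finset.range (g.totalDegree + 1),
            (if d ≤ i then homogeneousComponent d g * homogeneousComponent (i - d) (A g) else 0) := by
          refine Finset.sum_congr rfl fun g _ => ?_
          have hg1 : ∀ B : MvPolynomial (Fin (n + 1)) K, B * g
              = ∑ d ∈ Finset.range (g.totalDegree + 1), homogeneousComponent d g * B := by
            intro B
            conv_lhs => rw [← sum_homogeneousComponent g]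
            rw [Finset.mul_sum]
            exact Finset.sum_congr rfl fun d _ => mul_comm _ _
          rw [hg1 (A g), map_sum]
          exact Finset.sum_congr rfl fun d _ =>
            homogComponent_homog_mul (homogeneousComponent_isHomogeneous d g) i
  rw [hF2]
  refine Ideal.sum_mem _ fun g hg => Ideal.sum_mem _ fun d hd => ?_
  by_cases hdi : d ≤ i
  · rw [if_pos hdi]
    set gd := homogeneousComponent d g with hgddef
    set hA' := homogeneousComponent (i - d) (A g) with hA'def
    have hgdJ : gd ∈ J := hcc g (hG ▸ Ideal.subset_span hg) d
    have hgdhom : gd.IsHomogeneous d := homogeneousComponent_isHomogeneous d g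
    have hA'hom : hA'.IsHomogeneous (i - d) := homogeneousComponent_isHomogeneous (i - d) (A g)
    have hdD : d ≤ D := by
      have h1 : d ≤ g.totalDegree := by
        have := Finset.mem_range.mp hd; omega
      exact le_trans h1 (Finset.le_sup hg)
    have hbound : ∀ q ∈ T 0, 2 * Nq q ≤ i - d := by
      intro q _
      have h1 : 2 * Nq q ≤ MN :=
        Finset.le_sup (f := fun q : Fin s => 2 * Nq q) (Finset.mem_univ q)
      omega
    obtain ⟨a, sf, haI0, hahom, hdecomp⟩ := hLag (i - d) hbound hA' hA'hom
    rw [hdecomp, mul_add, Finset.mul_sum]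
    refine Ideal.add_mem _ ?_ (Ideal.sum_mem _ fun q hq => ?_)
    · -- gd * a ∈ ∂J'
      have humem : gd * a ∈ J' := by
        rw [mul_comm, hI0J]
        exact Ideal.mul_mem_mul haI0 hgdJ
      have huhom : (gd * a).IsHomogeneous i := by
        have := hgdhom.mul hahom
        rwa [show d + (i - d) = i from by omega] at this
      have := mul_mem_partialsIdeal humem huhom (by omega) 1
      rwa [one_mul] at this
    · -- gd * (Cq q ^ 2 * sf q) ∈ ∂J'
      have hqT : q ∈ T 0 := hq
      have hmem := J_mul_Cq_sq_mem v T ν cf q (fun q' hq' => hcf1 q q' hq') hqT (hν 0)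
        (hv0 q) (sf q * gd) (Ideal.mul_mem_left _ (sf q) hgdJ)
      rw [show (CqD T (fun k => ν k + if k.val = 0 then 1 else 0) cf q) ^ 2 * (sf q * gd)
        = gd * ((Cq q) ^ 2 * sf q) from by rw [hCqdef, hedef]; ring] at hmem
      exact hmem
  · rw [if_neg hdi]
    exact Ideal.zero_mem _
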